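/- Let P and Q be probability measures on the same measurable space and A a measurable event with complement A^c. Then P(A) + Q(A^c) ≥ (1/2) F(P,Q), where F(P,Q) = (∫ √(pq) dμ)^2 is the squared Bhattacharyya coefficient. -/

import Mathlib

open MeasureTheory Real
open scoped ENNReal

/-- For probability measures `P, Q` with densities `p, q` w.r.t. the dominating
probability measure `μ = (P+Q)/2`, and any measurable event `A`,
`P(A) + Q(Aᶜ) ≥ (1/2) F(P,Q)` where `F(P,Q) = (∫ √(p q) dμ)²` is the squared
Bhattacharyya coefficient. -/
theorem bretagnolle_huber_bhattacharyya {Ω : Type*} [MeasurableSpace Ω]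
    (P Q : Measure Ω) [IsProbabilityMeasure P] [IsProbabilityMeasure Q]
    (A : Set Ω) (hA : MeasurableSet A) :
    (P A).toReal + (Q Aᶜ).toReal ≥
      (1 / 2) * (∫ x, Real.sqrt ((P.rnDeriv ((2 : ℝ≥0∞)⁻¹ • (P + Q)) x).toReal *
        (Q.rnDeriv ((2 : ℝ≥0∞)⁻¹ • (P + Q)) x).toReal) ∂((2 : ℝ≥0∞)⁻¹ • (P + Q))) ^ 2 := by
  set μ : Measure Ω := (2 : ℝ≥0∞)⁻¹ • (P + Q) with hμdef
  have hPμ : P ≪ μ := by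
    refine Measure.AbsolutelyContinuous.mk fun s hs h => ?_
    have h2 : ((2 : ℝ≥0∞)⁻¹ • (P + Q)) s = 0 := h
    rw [Measure.smul_apply, Measure.add_apply, smul_eq_mul, mul_eq_zero] at h2
    rcases h2 with h2 | h2
    · exact absurd h2 (by simp)
    · exact (add_eq_zero.mp h2).1
  have hQμ : Q ≪ μ := by
    refine Measure.AbsolutelyContinuous.mk fun s hs h => ?_
    have h2 : ((2 : ℝ≥0∞)⁻¹ • (P + Q)) s = 0 := h
    rw [Measure.smul_apply, Measure.add_apply, smul_eq_mul, mul_eq_zero] at h2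
    rcases h2 with h2 | h2
    · exact absurd h2 (by simp)
    · exact (add_eq_zero.mp h2).2
  have hμprob : IsProbabilityMeasure μ := by
    constructor
    rw [hμdef, Measure.smul_apply, Measure.add_apply, measure_univ, measure_univ, smul_eq_mul]
    rw [one_add_one_eq_two, ENNReal.inv_mul_cancel two_ne_zero ENNReal.ofNat_ne_top]
  set f : Ω → ℝ := fun x => Real.sqrt (P.rnDeriv μ x).toReal with hfdef
  set g : Ω → ℝ := fun x => Real.sqrt (Q.rnDeriv μ x).toReal with hgdef
  have hfm : AEStronglyMeasurable f μ :=
    ((P.measurable_rnDeriv μ).ennreal_toReal.sqrt).aestronglyMeasurable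
  have hgm : AEStronglyMeasurable g μ :=
    ((Q.measurable_rnDeriv μ).ennreal_toReal.sqrt).aestronglyMeasurable
  have hf2int : Integrable (fun x => f x ^ 2) μ := by
    refine (Measure.integrable_toReal_rnDeriv (μ := P) (ν := μ)).congr ?_
    filter_upwards with x
    rw [hfdef]; exact (Real.sq_sqrt ENNReal.toReal_nonneg).symm
  have hg2int : Integrable (fun x => g x ^ 2) μ := by
    refine (Measure.integrable_toReal_rnDeriv (μ := Q) (ν := μ)).congr ?_
    filter_upwards with x
    rw [hgdef]; exact (Real.sq_sqrt ENNReal.toReal_nonneg).symm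
  have hfL2 : MemLp f 2 μ := (memLp_two_iff_integrable_sq hfm).mpr hf2int
  have hgL2 : MemLp g 2 μ := (memLp_two_iff_integrable_sq hgm).mpr hg2int
  have hfgint : Integrable (fun x => f x * g x) μ := by
    refine ((hf2int.add hg2int).div_const 2).mono' (hfm.mul hgm) ?_
    filter_upwards with x
    rw [Real.norm_of_nonneg (mul_nonneg (Real.sqrt_nonneg _) (Real.sqrt_nonneg _))]
    simp only [Pi.add_apply]
    nlinarith [sq_nonneg (f x - g x)]
  have hEq : (fun x => Real.sqrt ((P.rnDeriv μ x).toReal * (Q.rnDeriv μ x).toReal))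
      = fun x => f x * g x := by
    funext x
    exact Real.sqrt_mul ENNReal.toReal_nonneg _
  -- Cauchy-Schwarz on a set
  have key : ∀ s : Set Ω, MeasurableSet s →
      ∫ x in s, f x * g x ∂μ ≤ Real.sqrt (P s).toReal * Real.sqrt (Q s).toReal := by
    intro s hs
    have hCS := integral_mul_le_Lp_mul_Lq_of_nonneg (μ := μ.restrict s)
      (Real.HolderConjugate.two_two : (2:ℝ).HolderConjugate 2) (f := f) (g := g)
      (Filter.Eventually.of_forall fun x => Real.sqrt_nonneg _)
      (Filter.Eventually.of_forall fun x => Real.sqrt_nonneg _)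
      (by rw [show ENNReal.ofReal (2:ℝ) = 2 by norm_num]; exact hfL2.restrict s)
      (by rw [show ENNReal.ofReal (2:ℝ) = 2 by norm_num]; exact hgL2.restrict s)
    have hf2 : ∫ x in s, f x ^ (2 : ℝ) ∂μ = (P s).toReal := by
      rw [← measureReal_def, ← Measure.setIntegral_toReal_rnDeriv hPμ s]
      refine setIntegral_congr_fun hs fun x _ => ?_
      rw [hfdef]
      rw [show ((2 : ℝ)) = ((2 : ℕ) : ℝ) by norm_num, Real.rpow_natCast]
      exact Real.sq_sqrt ENNReal.toReal_nonneg
    have hg2 : ∫ x in s, g x ^ (2 : ℝ) ∂μ = (Q s).toReal := by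
      rw [← measureReal_def, ← Measure.setIntegral_toReal_rnDeriv hQμ s]
      refine setIntegral_congr_fun hs fun x _ => ?_
      rw [hgdef]
      rw [show ((2 : ℝ)) = ((2 : ℕ) : ℝ) by norm_num, Real.rpow_natCast]
      exact Real.sq_sqrt ENNReal.toReal_nonneg
    rw [hf2, hg2] at hCS
    calc ∫ x in s, f x * g x ∂μ ≤ (P s).toReal ^ (1/2 : ℝ) * (Q s).toReal ^ (1/2 : ℝ) := hCS
    _ = Real.sqrt (P s).toReal * Real.sqrt (Q s).toReal := by
        rw [Real.sqrt_eq_rpow, Real.sqrt_eq_rpow]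
  have hbound : ∫ x, f x * g x ∂μ ≤
      Real.sqrt (P A).toReal + Real.sqrt (Q Aᶜ).toReal := by
    rw [← integral_add_compl hA hfgint]
    have h1 : ∫ x in A, f x * g x ∂μ ≤ Real.sqrt (P A).toReal := by
      calc ∫ x in A, f x * g x ∂μ ≤ Real.sqrt (P A).toReal * Real.sqrt (Q A).toReal := key A hA
      _ ≤ Real.sqrt (P A).toReal * 1 := by
          refine mul_le_mul_of_nonneg_left ?_ (Real.sqrt_nonneg _)
          rw [show (1:ℝ) = Real.sqrt 1 by simp]
          refine Real.sqrt_le_sqrt ?_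
          exact ENNReal.toReal_le_of_le_ofReal one_pos.le (by simpa using prob_le_one)
      _ = Real.sqrt (P A).toReal := mul_one _
    have h2 : ∫ x in Aᶜ, f x * g x ∂μ ≤ Real.sqrt (Q Aᶜ).toReal := by
      calc ∫ x in Aᶜ, f x * g x ∂μ
          ≤ Real.sqrt (P Aᶜ).toReal * Real.sqrt (Q Aᶜ).toReal := key Aᶜ hA.compl
      _ ≤ 1 * Real.sqrt (Q Aᶜ).toReal := by
          refine mul_le_mul_of_nonneg_right ?_ (Real.sqrt_nonneg _)
          rw [show (1:ℝ) = Real.sqrt 1 by simp]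
          refine Real.sqrt_le_sqrt ?_
          exact ENNReal.toReal_le_of_le_ofReal one_pos.le (by simpa using prob_le_one)
      _ = Real.sqrt (Q Aᶜ).toReal := one_mul _
    linarith
  rw [hEq]
  set B := ∫ x, f x * g x ∂μ with hBdef
  have hBnn : 0 ≤ B := integral_nonneg fun x => mul_nonneg (Real.sqrt_nonneg _) (Real.sqrt_nonneg _)
  have ha : Real.sqrt (P A).toReal ^ 2 = (P A).toReal := Real.sq_sqrt ENNReal.toReal_nonneg
  have hb : Real.sqrt (Q Aᶜ).toReal ^ 2 = (Q Aᶜ).toReal := Real.sq_sqrt ENNReal.toReal_nonneg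
  have hsa := Real.sqrt_nonneg (P A).toReal
  nlinarith [sq_nonneg (Real.sqrt (P A).toReal - Real.sqrt (Q Aᶜ).toReal),
    sq_nonneg (Real.sqrt (P A).toReal + Real.sqrt (Q Aᶜ).toReal), Real.sqrt_nonneg (Q Aᶜ).toReal]
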